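/- Let 𝔤 be a compact Lie algebra (a real Lie algebra with an ad-invariant positive-definite inner product) and 𝔟 a solvable real subalgebra of 𝔤_ℂ. Then 𝔟 ∩ 𝔤 is an abelian subalgebra of 𝔤. -/

import Mathlib

open Module TensorProduct

/-- The complexification `ℂ ⊗[ℝ] L` of a real Lie algebra, viewed as a real Lie algebra. -/
noncomputable instance realLieTensor (L : Type*) [LieRing L] [LieAlgebra ℝ L] :
    LieAlgebra ℝ (ℂ ⊗[ℝ] L) where
  lie_smul r x y := by
    rw [← algebraMap_smul ℂ r y, ← algebraMap_smul ℂ r ⁅x, y⁆]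
    exact lie_smul ((algebraMap ℝ ℂ) r) x y

open LieAlgebra in
theorem solvable_abelian' (M : Type*) [LieRing M] [LieAlgebra ℝ M] [FiniteDimensional ℝ M]
    (B : M →ₗ[ℝ] M →ₗ[ℝ] ℝ)
    (hsymm : ∀ x y : M, B x y = B y x)
    (hpos : ∀ x : M, x ≠ 0 → 0 < B x x)
    (hinvt : ∀ x y z : M, B ⁅x, y⁆ z = - B y ⁅x, z⁆)
    (hs : LieAlgebra.IsSolvable M) :
    ∀ x y : M, ⁅x, y⁆ = 0 := by
  set D : ℕ → LieIdeal ℝ M := derivedSeries ℝ M with hD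
  have hrefl : B.IsRefl := fun x y h => by rw [hsymm]; exact h
  have hsucc : ∀ k, D (k + 1) = ⁅D k, D k⁆ := by
    intro k
    simp only [hD, derivedSeries_def]
    exact derivedSeriesOfIdeal_succ ℝ M ⊤ k
  have hD0 : D 0 = ⊤ := by simp [hD, derivedSeries_def]
  have hD1 : D 1 = ⁅(⊤ : LieIdeal ℝ M), (⊤ : LieIdeal ℝ M)⁆ := by
    rw [hsucc 0, hD0]
  set W : Submodule ℝ M := LieSubmodule.toSubmodule (D 1) with hW
  -- central elements
  have hcent : ∀ z : M, (∀ w ∈ W, B w z = 0) → ∀ x : M, ⁅x, z⁆ = 0 := by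
    intro z hz x
    by_contra h
    have hmem : ⁅x, ⁅x, z⁆⁆ ∈ W := by
      rw [hW, LieSubmodule.mem_toSubmodule, hD1]
      exact LieSubmodule.lie_mem_lie (LieSubmodule.mem_top _) (LieSubmodule.mem_top _)
    have : B ⁅x, z⁆ ⁅x, z⁆ = 0 := by
      rw [hinvt x z ⁅x, z⁆, hsymm, hz _ hmem, neg_zero]
    exact absurd this (ne_of_gt (hpos _ h))
  -- orthogonal decomposition
  have hnd : (LinearMap.BilinForm.restrict B W).Nondegenerate := by
    refine (LinearMap.IsRefl.nondegenerate_iff_separatingLeft (fun x y h => by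
      simp only [LinearMap.BilinForm.restrict_apply, LinearMap.domRestrict_apply] at h ⊢; rw [hsymm]; exact h)).mpr ?_
    intro m hm
    by_contra h
    have hm' := hm m
    simp only [LinearMap.BilinForm.restrict_apply] at hm'
    have : (m : M) ≠ 0 := fun h0 => h (Subtype.ext h0)
    exact absurd hm' (ne_of_gt (hpos _ this))
  have hcompl : IsCompl W (LinearMap.BilinForm.orthogonal B W) :=
    LinearMap.BilinForm.isCompl_orthogonal_of_restrict_nondegenerate hrefl hnd
  -- every bracket lies in D 2
  have hbr : ∀ x y : M, ⁅x, y⁆ ∈ D 2 := by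
    intro x y
    have hx : x ∈ W ⊔ LinearMap.BilinForm.orthogonal B W := by rw [hcompl.sup_eq_top]; trivial
    have hy : y ∈ W ⊔ LinearMap.BilinForm.orthogonal B W := by rw [hcompl.sup_eq_top]; trivial
    obtain ⟨w₁, hw₁, z₁, hz₁, rfl⟩ := Submodule.mem_sup.mp hx
    obtain ⟨w₂, hw₂, z₂, hz₂, rfl⟩ := Submodule.mem_sup.mp hy
    have hc₁ : ∀ x : M, ⁅x, z₁⁆ = 0 :=
      hcent z₁ (fun w hw => (LinearMap.BilinForm.mem_orthogonal_iff).mp hz₁ w hw) 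
    have hc₂ : ∀ x : M, ⁅x, z₂⁆ = 0 :=
      hcent z₂ (fun w hw => (LinearMap.BilinForm.mem_orthogonal_iff).mp hz₂ w hw)
    have hz₁' : ∀ x : M, ⁅z₁, x⁆ = 0 := fun x => by
      rw [← lie_skew, hc₁ x, neg_zero]
    have : ⁅w₁ + z₁, w₂ + z₂⁆ = ⁅w₁, w₂⁆ := by
      simp [lie_add, add_lie, hc₁, hc₂, hz₁']
    rw [this]
    rw [hsucc 1]
    exact LieSubmodule.lie_mem_lie ((LieSubmodule.mem_toSubmodule _).mp hw₁)
      ((LieSubmodule.mem_toSubmodule _).mp hw₂)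
  -- D 1 ≤ D 2 hence D 1 = D 2
  have hle : D 1 ≤ D 2 := by
    rw [hD1, LieSubmodule.lieIdeal_oper_eq_span]
    apply LieSubmodule.lieSpan_le.mpr
    rintro m ⟨x, y, rfl⟩
    exact hbr x y
  have hanti : ∀ {k l : ℕ}, l ≤ k → D k ≤ D l := by
    intro k l h
    rw [hD, derivedSeries_def, derivedSeries_def]
    exact derivedSeriesOfIdeal_antitone (I := ⊤) h
  have heq : D 2 = D 1 := le_antisymm (hanti one_le_two) hle
  have hall : ∀ k, D (k + 1) = D 1 := by
    intro k
    induction k with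
    | zero => rfl
    | succ n ih =>
      rw [hsucc (n + 1), ih, ← hsucc 1, heq]
  obtain ⟨k, hk⟩ := (LieAlgebra.isSolvable_iff ℝ M).mp hs
  have hbot : D 1 = ⊥ := by
    rw [← hall k]
    exact le_bot_iff.mp (hk ▸ hanti (Nat.le_succ k))
  intro x y
  have : ⁅x, y⁆ ∈ D 1 := by
    rw [hD1]
    exact LieSubmodule.lie_mem_lie (LieSubmodule.mem_top _) (LieSubmodule.mem_top _)
  rw [hbot] at this
  exact this

/-- Let `𝔤` be a compact Lie algebra (a real Lie algebra carrying an
ad-invariant positive-definite inner product `B`) and `𝔟` a solvable real subalgebra of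
`𝔤_ℂ = ℂ ⊗[ℝ] 𝔤`. Then `𝔟 ∩ 𝔤` is an abelian subalgebra of `𝔤`. -/
theorem stmt9 (L : Type*) [LieRing L] [LieAlgebra ℝ L] [FiniteDimensional ℝ L]
    (B : L →ₗ[ℝ] L →ₗ[ℝ] ℝ)
    (hsymm : ∀ x y : L, B x y = B y x)
    (hpos : ∀ x : L, x ≠ 0 → 0 < B x x)
    (hinvt : ∀ x y z : L, B ⁅x, y⁆ z = - B y ⁅x, z⁆)
    (b : LieSubalgebra ℝ (ℂ ⊗[ℝ] L)) (hb : LieAlgebra.IsSolvable ↥b) :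
    ∀ x y : L, (1 : ℂ) ⊗ₜ[ℝ] x ∈ b → (1 : ℂ) ⊗ₜ[ℝ] y ∈ b → ⁅x, y⁆ = 0 := by
  -- the real points of b form a Lie subalgebra of L
  have key : ∀ x y : L, ⁅(1 : ℂ) ⊗ₜ[ℝ] x, (1 : ℂ) ⊗ₜ[ℝ] y⁆ = (1 : ℂ) ⊗ₜ[ℝ] ⁅x, y⁆ := by
    intro x y
    rw [LieAlgebra.ExtendScalars.bracket_tmul, one_mul]
  set K : LieSubalgebra ℝ L :=
    { carrier := {x : L | (1 : ℂ) ⊗ₜ[ℝ] x ∈ b}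
      add_mem' := fun {x y} hx hy => by
        simp only [Set.mem_setOf_eq, TensorProduct.tmul_add] at *
        exact b.add_mem hx hy
      zero_mem' := by
        simp only [Set.mem_setOf_eq, TensorProduct.tmul_zero]
        exact b.zero_mem
      smul_mem' := fun r x hx => by
        simp only [Set.mem_setOf_eq, TensorProduct.tmul_smul] at *
        exact b.smul_mem r hx
      lie_mem' := fun {x y} hx hy => by
        simp only [Set.mem_setOf_eq] at *
        rw [← key]
        exact b.lie_mem hx hy } with hK
  -- an injective Lie algebra morphism K → b
  have hretr : ∀ x : L, (TensorProduct.lid ℝ L)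
      ((LinearMap.rTensor L Complex.reLm) ((1 : ℂ) ⊗ₜ[ℝ] x)) = x := by
    intro x
    simp [Complex.reLm]
  have hinj : ∀ x y : L, (1 : ℂ) ⊗ₜ[ℝ] x = (1 : ℂ) ⊗ₜ[ℝ] y → x = y := by
    intro x y h
    have := congrArg (fun t => (TensorProduct.lid ℝ L) ((LinearMap.rTensor L Complex.reLm) t)) h
    simpa [hretr] using this
  let f : ↥K →ₗ⁅ℝ⁆ ↥b :=
    { toFun := fun x => ⟨(1 : ℂ) ⊗ₜ[ℝ] (x : L), x.2⟩
      map_add' := fun x y => by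
        ext
        simp [TensorProduct.tmul_add]
      map_smul' := fun r x => by
        ext
        show (1 : ℂ) ⊗ₜ[ℝ] (r • (x : L)) = r • ((1 : ℂ) ⊗ₜ[ℝ] (x : L))
        rw [TensorProduct.tmul_smul]
      map_lie' := fun {x y} => by
        ext
        simp only [LieSubalgebra.coe_bracket, Submodule.coe_smul_of_tower]
        rw [← key] }
  have hfinj : Function.Injective f := by
    intro x y h
    exact Subtype.ext (hinj _ _ (congrArg Subtype.val h))
  have hKsolv : LieAlgebra.IsSolvable ↥K := hfinj.lieAlgebra_isSolvable
  -- restrict B to K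
  let B' : ↥K →ₗ[ℝ] ↥K →ₗ[ℝ] ℝ := LinearMap.BilinForm.restrict B K.toSubmodule
  have hab := solvable_abelian' ↥K B'
    (fun x y => hsymm x y)
    (fun x hx => hpos x (fun h0 => hx (Subtype.ext h0)))
    (fun x y z => hinvt x y z)
    hKsolv
  intro x y hx hy
  have := hab ⟨x, hx⟩ ⟨y, hy⟩
  exact congrArg Subtype.val this
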